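/- Let n ≥ 1, let p ∈ ℝ^n satisfy 0 ≤ p_1 ≤ p_2 ≤ ⋯ ≤ p_n ≤ 1 and set p_0 = 0, let g ∈ ℝ^n, and define c ∈ ℝ^n by c_j = ∑_{i=j}^n g_i. Then ∑_{i=1}^n (p_i − p_{i−1})·c_i² − (∑_{i=1}^n (p_i − p_{i−1})·c_i)² = γ̃²(p,g). -/

import Mathlib

/-- Abel summation on `Icc 1 n`. -/
lemma abel_aux (p F : ℕ → ℝ) : ∀ n : ℕ,
    ∑ i ∈ Finset.Icc 1 n, (p i - p (i - 1)) * F i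
      = ∑ i ∈ Finset.Icc 1 n, p i * (F i - F (i + 1)) + p n * F (n + 1) - p 0 * F 1 := by
  intro n
  induction n with
  | zero => simp
  | succ n ih =>
    rw [Finset.sum_Icc_succ_top (by omega), Finset.sum_Icc_succ_top (by omega), ih]
    simp only [Nat.add_sub_cancel]
    ring

/-- Square of a sum expanded into diagonal and off-diagonal parts. -/
lemma sq_sum_aux (f : ℕ → ℝ) : ∀ n : ℕ,
    (∑ i ∈ Finset.Icc 1 n, f i) ^ 2
      = ∑ i ∈ Finset.Icc 1 n, (f i) ^ 2
        + 2 * ∑ i ∈ Finset.Icc 1 n, f i * ∑ j ∈ Finset.Icc (i + 1) n, f j := by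
  intro n
  induction n with
  | zero => simp
  | succ n ih =>
    have h1 : ∑ i ∈ Finset.Icc 1 n, f i * ∑ j ∈ Finset.Icc (i + 1) (n + 1), f j
        = ∑ i ∈ Finset.Icc 1 n, (f i * ∑ j ∈ Finset.Icc (i + 1) n, f j + f i * f (n + 1)) := by
      refine Finset.sum_congr rfl fun i hi => ?_
      rw [Finset.sum_Icc_succ_top (by simp at hi; omega)]
      ring
    rw [Finset.sum_Icc_succ_top (by omega) f,
      Finset.sum_Icc_succ_top (by omega) (fun i => (f i) ^ 2),
      Finset.sum_Icc_succ_top (by omega) (fun i => f i * ∑ j ∈ Finset.Icc (i + 1) (n + 1), f j),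
      h1, Finset.sum_add_distrib, ← Finset.sum_mul]
    have h2 : Finset.Icc (n + 1 + 1) (n + 1) = ∅ := Finset.Icc_eq_empty (by omega)
    rw [h2]
    simp only [Finset.sum_empty, mul_zero]
    nlinarith [ih]

theorem variance_eq_modified_gini (n : ℕ) (hn : 1 ≤ n) (p g c : ℕ → ℝ)
    (hp0 : p 0 = 0)
    (hp1 : 0 ≤ p 1)
    (hmono : ∀ i, 1 ≤ i → i < n → p i ≤ p (i + 1))
    (hpn : p n ≤ 1)
    (hc : ∀ j, c j = ∑ i ∈ Finset.Icc j n, g i) :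
    (∑ i ∈ Finset.Icc 1 n, (p i - p (i - 1)) * (c i) ^ 2)
      - (∑ i ∈ Finset.Icc 1 n, (p i - p (i - 1)) * c i) ^ 2
    = (∑ i ∈ Finset.Icc 1 n, p i * (1 - p i) * (g i) ^ 2)
      + 2 * ∑ i ∈ Finset.Icc 1 n, ∑ j ∈ Finset.Icc (i + 1) n,
          p i * (1 - p j) * (g i * g j) := by
  have hcn1 : c (n + 1) = 0 := by
    rw [hc, Finset.Icc_eq_empty (by omega), Finset.sum_empty]
  have hcsucc : ∀ i, i ≤ n → c i = g i + c (i + 1) := by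
    intro i hi
    rw [hc, hc]
    have : Finset.Icc i n = insert i (Finset.Icc (i + 1) n) := by
      ext x; simp only [Finset.mem_Icc, Finset.mem_insert]; omega
    rw [this, Finset.sum_insert (by simp)]
  -- Abel summation for both sums
  have E2 : ∑ i ∈ Finset.Icc 1 n, (p i - p (i - 1)) * c i
      = ∑ i ∈ Finset.Icc 1 n, p i * g i := by
    rw [abel_aux p c n, hcn1, hp0]
    simp only [mul_zero, zero_mul, add_zero, sub_zero]
    refine Finset.sum_congr rfl fun i hi => ?_
    simp only [Finset.mem_Icc] at hi
    rw [hcsucc i hi.2]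
    ring
  have E1 : ∑ i ∈ Finset.Icc 1 n, (p i - p (i - 1)) * (c i) ^ 2
      = ∑ i ∈ Finset.Icc 1 n, (p i * (g i) ^ 2 + 2 * (p i * g i) * c (i + 1)) := by
    rw [abel_aux p (fun i => (c i) ^ 2) n, hcn1, hp0]
    simp only [zero_mul, sub_zero]
    rw [show (0:ℝ)^2 = 0 by ring, mul_zero, add_zero]
    refine Finset.sum_congr rfl fun i hi => ?_
    simp only [Finset.mem_Icc] at hi
    rw [hcsucc i hi.2]
    ring
  have E3 := sq_sum_aux (fun i => p i * g i) n
  -- rewrite the double sum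
  have E4 : ∑ i ∈ Finset.Icc 1 n, ∑ j ∈ Finset.Icc (i + 1) n, p i * (1 - p j) * (g i * g j)
      = ∑ i ∈ Finset.Icc 1 n,
          (p i * g i * c (i + 1) - p i * g i * ∑ j ∈ Finset.Icc (i + 1) n, p j * g j) := by
    refine Finset.sum_congr rfl fun i hi => ?_
    rw [hc (i + 1), Finset.mul_sum, Finset.mul_sum, ← Finset.sum_sub_distrib]
    refine Finset.sum_congr rfl fun j hj => ?_
    ring
  have E5 : ∑ i ∈ Finset.Icc 1 n, p i * (1 - p i) * (g i) ^ 2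
      = ∑ i ∈ Finset.Icc 1 n, (p i * (g i) ^ 2 - (p i * g i) ^ 2) := by
    refine Finset.sum_congr rfl fun i hi => ?_
    ring
  rw [E1, E2, E3, E4, E5]
  simp only [Finset.sum_add_distrib, Finset.sum_sub_distrib]
  rw [show ∑ x ∈ Finset.Icc 1 n, 2 * (p x * g x) * c (x + 1)
      = 2 * ∑ x ∈ Finset.Icc 1 n, p x * g x * c (x + 1) by
    rw [Finset.mul_sum]; exact Finset.sum_congr rfl fun i _ => by ring]
  ring
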